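/- (Lemma 2) Let x : ℕ → ℝⁿ satisfy x(k+1) = A·x(0) + W·x(k) for all k ∈ ℕ, and set L := A + W − I. Then for every m ∈ ℕ and every vector w ∈ ℝⁿ: P·w = 0 if and only if ⟨W^k·L·x(0), w⟩ = 0 for every k ∈ {0, 1, …, m−1}; that is, the kernel of P equals the kernel of the m×n matrix whose k-th row is (W^k·L·x(0))ᵀ. -/

import Mathlib

open Matrix

/-- Lemma 2: for the dynamics x(k+1) = A·x(0) + W·x(k) with L := A + W − I and
P := Σ_{k=0}^{m−1} (x(k+1) − x(k))·(x(k+1) − x(k))ᵀ, a vector w lies in the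
kernel of P iff ⟨W^k·L·x(0), w⟩ = 0 for every k ∈ {0, …, m−1}. -/
theorem lemma2_ker_P (n : ℕ) (A W : Matrix (Fin n) (Fin n) ℝ)
    (x : ℕ → Fin n → ℝ)
    (hdyn : ∀ k : ℕ, x (k + 1) = A.mulVec (x 0) + W.mulVec (x k))
    (L : Matrix (Fin n) (Fin n) ℝ) (hL : L = A + W - 1) :
    ∀ m : ℕ, ∀ w : Fin n → ℝ,
      (∑ k ∈ Finset.range m,
          Matrix.vecMulVec (x (k + 1) - x k) (x (k + 1) - x k)).mulVec w = 0 ↔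
        ∀ k < m, (W ^ k * L).mulVec (x 0) ⬝ᵥ w = 0 := by
  have hdiff : ∀ k : ℕ, x (k + 1) - x k = (W ^ k * L).mulVec (x 0) := by
    intro k
    induction k with
    | zero =>
      rw [pow_zero, one_mul, hL, hdyn 0]
      ext i
      simp [Matrix.add_mulVec, Matrix.sub_mulVec, Matrix.one_mulVec]
    | succ k ih =>
      have : x (k + 2) - x (k + 1) = W.mulVec (x (k + 1) - x k) := by
        rw [hdyn (k + 1), hdyn k, Matrix.mulVec_sub]
        abel
      rw [this, ih, Matrix.mulVec_mulVec, ← mul_assoc, ← pow_succ']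
  intro m w
  set v : ℕ → Fin n → ℝ := fun k => (W ^ k * L) *ᵥ x 0 with hv
  have summulvec : ∀ (s : Finset ℕ) (M : ℕ → Matrix (Fin n) (Fin n) ℝ),
      (∑ k ∈ s, M k) *ᵥ w = ∑ k ∈ s, M k *ᵥ w := by
    intro s M
    induction s using Finset.induction_on with
    | empty => simp
    | insert _ _ hnot ih => rw [Finset.sum_insert hnot, Finset.sum_insert hnot,
        Matrix.add_mulVec, ih]
  have sumdot : ∀ (s : Finset ℕ) (f : ℕ → Fin n → ℝ),
      (∑ k ∈ s, f k) ⬝ᵥ w = ∑ k ∈ s, f k ⬝ᵥ w := by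
    intro s f
    induction s using Finset.induction_on with
    | empty => simp
    | insert _ _ hnot ih => rw [Finset.sum_insert hnot, Finset.sum_insert hnot,
        add_dotProduct, ih]
  have key : ∀ u : Fin n → ℝ, (Matrix.vecMulVec u u) *ᵥ w = (u ⬝ᵥ w) • u := by
    intro u
    ext i
    simp [Matrix.vecMulVec_apply, Matrix.mulVec, dotProduct,
      Finset.mul_sum, mul_comm, mul_left_comm]
  have hPw : (∑ k ∈ Finset.range m,
      Matrix.vecMulVec (x (k + 1) - x k) (x (k + 1) - x k)) *ᵥ w
      = ∑ k ∈ Finset.range m, (v k ⬝ᵥ w) • v k := by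
    rw [summulvec]
    exact Finset.sum_congr rfl fun k _ => by rw [hdiff k]; exact key _
  rw [hPw]
  constructor
  · intro h k hk
    have hsum : (∑ k ∈ Finset.range m, (v k ⬝ᵥ w) • v k) ⬝ᵥ w = 0 := by
      rw [h]; simp
    rw [sumdot] at hsum
    simp only [smul_dotProduct, smul_eq_mul] at hsum
    have hsq : ∀ j ∈ Finset.range m, (0:ℝ) ≤ v j ⬝ᵥ w * (v j ⬝ᵥ w) :=
      fun j _ => mul_self_nonneg _
    have := (Finset.sum_eq_zero_iff_of_nonneg hsq).mp hsum k (Finset.mem_range.mpr hk)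
    exact mul_self_eq_zero.mp this
  · intro h
    refine Finset.sum_eq_zero fun k hk => ?_
    rw [h k (Finset.mem_range.mp hk), zero_smul]
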